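/- For every finite graph G on d vertices, the binomial transform coefficients χ*_0, ..., χ*_d of the chromatic polynomial (defined by Σ_{n≥0} χ_G(n) z^n = (Σ_j χ*_j z^j)/(1−z)^{d+1}) satisfy χ*_j ≥ 0 for all j, χ*_0 = 0 if d ≥ 1, and χ*_d equals the number of acyclic orientations of G. -/

import Mathlib

open PowerSeries Finset

namespace Stmt17Aux


lemma mul_one_sub_X (f : ℕ → ℤ) :
    (PowerSeries.mk f) * (1 - PowerSeries.X) =
      PowerSeries.mk (fun n => f n - if n = 0 then 0 else f (n - 1)) := by
  ext n
  rw [mul_sub, mul_one]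
  simp only [map_sub, coeff_mk]
  rcases n with _ | m
  · simp
  · simp [PowerSeries.coeff_succ_mul_X]

lemma ps_choose (d : ℕ) :
    (PowerSeries.mk fun n => ((n + d).choose d : ℤ)) * (1 - PowerSeries.X) ^ (d + 1) = 1 := by
  induction d with
  | zero =>
    rw [pow_one, mul_one_sub_X]
    ext n
    rcases n with _ | m <;> simp [PowerSeries.coeff_one]
  | succ d ih =>
    have step : (PowerSeries.mk fun n => ((n + (d+1)).choose (d+1) : ℤ)) * (1 - PowerSeries.X)
        = PowerSeries.mk fun n => ((n + d).choose d : ℤ) := by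
      rw [mul_one_sub_X]
      ext n
      simp only [coeff_mk]
      rcases n with _ | m
      · simp
      · have h1 : m + 1 + (d + 1) = (m + 1 + d) + 1 := by ring
        have h2 : m + 1 - 1 + (d + 1) = m + 1 + d := by omega
        rw [if_neg (Nat.succ_ne_zero m), h1, h2]
        have := Nat.choose_succ_succ (m + 1 + d) d
        push_cast [this]
        ring
    calc (PowerSeries.mk fun n => ((n + (d+1)).choose (d+1) : ℤ)) * (1 - PowerSeries.X) ^ (d + 2)
        = ((PowerSeries.mk fun n => ((n + (d+1)).choose (d+1) : ℤ)) * (1 - PowerSeries.X))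
            * (1 - PowerSeries.X) ^ (d + 1) := by ring
      _ = 1 := by rw [step, ih]

lemma ps_shift (d j : ℕ) :
    (PowerSeries.mk fun n => (if j ≤ n then ((n - j + d).choose d : ℤ) else 0)) *
      (1 - PowerSeries.X) ^ (d + 1) = PowerSeries.X ^ j := by
  have h : (PowerSeries.mk fun n => (if j ≤ n then ((n - j + d).choose d : ℤ) else 0))
      = PowerSeries.X ^ j * PowerSeries.mk fun n => ((n + d).choose d : ℤ) := by
    ext n
    rw [PowerSeries.coeff_X_pow_mul']
    simp [coeff_mk]
  rw [h, mul_assoc, ps_choose, mul_one]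



/-- condition: weakly increasing consecutive, strict at positions in `S`. -/
def MC (d n : ℕ) (S : Finset ℕ) (g : Fin d → Fin n) : Prop :=
  ∀ i j : Fin d, (j : ℕ) = (i : ℕ) + 1 → (g i ≤ g j ∧ ((i : ℕ) ∈ S → g i < g j))

lemma add_le_chain {d : ℕ} {f : Fin d → ℕ}
    (hf : ∀ i j : Fin d, (j : ℕ) = (i : ℕ) + 1 → f i < f j) :
    ∀ (t : ℕ) (a b : Fin d), (b : ℕ) = (a : ℕ) + t → f a + t ≤ f b := by
  intro t
  induction t with
  | zero =>
    intro a b h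
    have : a = b := Fin.ext (by omega)
    subst this; omega
  | succ t ih =>
    intro a b h
    have hmid : (a : ℕ) + t < d := by have := b.isLt; omega
    have h1 : f a + t ≤ f ⟨(a : ℕ) + t, hmid⟩ := ih a _ rfl
    have h2 : f ⟨(a : ℕ) + t, hmid⟩ < f b := hf _ _ (by simp; omega)
    omega

lemma le_chain {d : ℕ} {f : Fin d → ℕ}
    (hf : ∀ i j : Fin d, (j : ℕ) = (i : ℕ) + 1 → f i ≤ f j) :
    ∀ (t : ℕ) (a b : Fin d), (b : ℕ) = (a : ℕ) + t → f a ≤ f b := by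
  intro t
  induction t with
  | zero =>
    intro a b h
    have : a = b := Fin.ext (by omega)
    subst this; omega
  | succ t ih =>
    intro a b h
    have hmid : (a : ℕ) + t < d := by have := b.isLt; omega
    have h1 : f a ≤ f ⟨(a : ℕ) + t, hmid⟩ := ih a _ rfl
    have h2 : f ⟨(a : ℕ) + t, hmid⟩ ≤ f b := hf _ _ (by simp; omega)
    omega

lemma card_strictMono (a m : ℕ) :
    Nat.card {h : Fin a → Fin m // StrictMono h} = m.choose a := by
  classical
  have e : {h : Fin a → Fin m // StrictMono h} ≃ {s : Finset (Fin m) // s.card = a} := by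
    refine ⟨fun h => ⟨Finset.univ.image h.1, ?_⟩,
        fun s => ⟨(Finset.orderEmbOfFin s.1 s.2 : Fin a → Fin m),
          (Finset.orderEmbOfFin s.1 s.2).strictMono⟩, ?_, ?_⟩
    · rw [Finset.card_image_of_injective _ h.2.injective, Finset.card_univ, Fintype.card_fin]
    · rintro ⟨h, hm⟩
      apply Subtype.ext
      funext x
      exact (congrFun (Finset.orderEmbOfFin_unique _ (fun x => Finset.mem_image_of_mem _ (Finset.mem_univ x)) hm) x).symm
    · rintro ⟨s, hs⟩
      apply Subtype.ext
      ext x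
      simp only [Finset.mem_image]
      constructor
      · rintro ⟨i, -, rfl⟩; exact Finset.orderEmbOfFin_mem _ _ _
      · intro hx
        obtain ⟨i, hi⟩ := (Finset.range_orderEmbOfFin s hs).ge hx
        exact ⟨i, Finset.mem_univ _, hi⟩
  rw [Nat.card_congr e, Nat.card_eq_fintype_card, Fintype.card_finset_len, Fintype.card_fin]

lemma card_MC (d n : ℕ) (hd : 1 ≤ d) (S : Finset ℕ) (hS : S ⊆ Finset.range (d - 1)) :
    Nat.card {g : Fin d → Fin n // MC d n S g} =
      if S.card + 1 ≤ n then (n - (S.card + 1) + d).choose d else 0 := by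
  classical
  set T : Finset ℕ := Finset.range (d - 1) \ S with hT
  set c : ℕ → ℕ := fun k => (T.filter (fun x => x < k)).card with hc
  have hcard_le : S.card ≤ d - 1 := by
    have := Finset.card_le_card hS; simpa using this
  have hTcard : T.card = d - 1 - S.card := by
    rw [hT, Finset.card_sdiff_of_subset hS, Finset.card_range]
  have hc_succ : ∀ k, c (k + 1) = c k + (if k ∈ T then 1 else 0) := by
    intro k
    have : T.filter (fun x => x < k + 1) =
        if k ∈ T then insert k (T.filter (fun x => x < k)) else T.filter (fun x => x < k) := by
      split_ifs with hk
      · ext x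
        simp only [Finset.mem_filter, Finset.mem_insert]
        constructor
        · rintro ⟨hx, hlt⟩
          rcases Nat.lt_succ_iff_lt_or_eq.mp hlt with h | rfl
          · exact Or.inr ⟨hx, h⟩
          · exact Or.inl rfl
        · rintro (rfl | ⟨hx, hlt⟩)
          · exact ⟨hk, Nat.lt_succ_self _⟩
          · exact ⟨hx, Nat.lt_succ_of_lt hlt⟩
      · ext x
        simp only [Finset.mem_filter]
        constructor
        · rintro ⟨hx, hlt⟩
          rcases Nat.lt_succ_iff_lt_or_eq.mp hlt with h | rfl
          · exact ⟨hx, h⟩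
          · exact absurd hx hk
        · rintro ⟨hx, hlt⟩
          exact ⟨hx, Nat.lt_succ_of_lt hlt⟩
    rw [hc]
    simp only [this]
    split_ifs with hk
    · rw [Finset.card_insert_of_notMem (by simp)]
    · omega
  have hc_le : ∀ k, c k ≤ k := by
    intro k
    have : T.filter (fun x => x < k) ⊆ Finset.range k := by
      intro x hx
      simp only [Finset.mem_filter] at hx
      exact Finset.mem_range.mpr hx.2
    simpa using Finset.card_le_card this
  have hc_mono : ∀ k k', k ≤ k' → c k ≤ c k' := by
    intro k k' hkk'
    apply Finset.card_le_card
    intro x hx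
    simp only [Finset.mem_filter] at hx ⊢
    exact ⟨hx.1, lt_of_lt_of_le hx.2 hkk'⟩
  have hc_top : c (d - 1) = d - 1 - S.card := by
    rw [← hTcard]
    show (T.filter (fun x => x < d - 1)).card = T.card
    congr 1
    apply Finset.filter_true_of_mem
    intro x hx
    rw [hT, Finset.mem_sdiff, Finset.mem_range] at hx
    exact hx.1
  have hc_lower : ∀ k, k ≤ d - 1 → d - 1 - S.card ≤ c k + ((d - 1) - k) := by
    intro k hk
    have hsub : T.filter (fun x => x < d - 1) ⊆
        (T.filter (fun x => x < k)) ∪ Finset.Ico k (d - 1) := by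
      intro x hx
      simp only [Finset.mem_filter, Finset.mem_union, Finset.mem_Ico] at hx ⊢
      rcases lt_or_ge x k with h | h
      · exact Or.inl ⟨hx.1, h⟩
      · exact Or.inr ⟨h, hx.2⟩
    have := Finset.card_le_card hsub
    have h2 := Finset.card_union_le (T.filter (fun x => x < k)) (Finset.Ico k (d - 1))
    have h3 : (Finset.Ico k (d - 1)).card = d - 1 - k := Nat.card_Ico k (d - 1)
    have h4 : (T.filter (fun x => x < d - 1)).card = d - 1 - S.card := by
      rw [← hc_top]
    have hck : (T.filter (fun x => x < k)).card = c k := rfl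
    omega
  -- key step inequality for the "h" function
  have hstep : ∀ (g : Fin d → Fin n), MC d n S g →
      ∀ i j : Fin d, (j : ℕ) = (i : ℕ) + 1 →
        ((g i : ℕ) + c i) < ((g j : ℕ) + c j) := by
    intro g hg i j hij
    obtain ⟨hle, hstrict⟩ := hg i j hij
    rw [hij, hc_succ]
    by_cases hiS : (i : ℕ) ∈ S
    · have := hstrict hiS
      have hmono := hc_mono (i : ℕ) ((i : ℕ)) le_rfl
      have : (g i : ℕ) < g j := this
      omega
    · have hiT : (i : ℕ) ∈ T := by
        rw [hT, Finset.mem_sdiff, Finset.mem_range]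
        refine ⟨?_, hiS⟩
        have := j.isLt; omega
      rw [if_pos hiT]
      have : (g i : ℕ) ≤ g j := hle
      omega
  by_cases hn : S.card + 1 ≤ n
  · rw [if_pos hn]
    set m : ℕ := n - (S.card + 1) + d with hm
    have key : {g : Fin d → Fin n // MC d n S g} ≃ {h : Fin d → Fin m // StrictMono h} := by
      refine ⟨?_, ?_, ?_, ?_⟩
      · rintro ⟨g, hg⟩
        refine ⟨fun i => ⟨(g i : ℕ) + c i, ?_⟩, ?_⟩
        · have h1 : (g i : ℕ) < n := (g i).isLt
          have h2 : c i ≤ c (d - 1) := hc_mono _ _ (by have := i.isLt; omega)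
          rw [hc_top] at h2
          omega
        · have hcons : ∀ i j : Fin d, (j : ℕ) = (i : ℕ) + 1 →
              ((g i : ℕ) + c i) < ((g j : ℕ) + c j) := hstep g hg
          intro a b hab
          have h := add_le_chain (f := fun i => (g i : ℕ) + c i) hcons ((b : ℕ) - a) a b (by omega)
          have hab' : (a : ℕ) < b := hab
          simp only [Fin.mk_lt_mk]
          omega
      · rintro ⟨h, hh⟩
        have hcons : ∀ i j : Fin d, (j : ℕ) = (i : ℕ) + 1 → ((h i : ℕ)) < ((h j : ℕ)) := by
          intro i j hij
          exact hh (Fin.lt_def.mpr (by omega))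
        have hchain := add_le_chain (f := fun i => (h i : ℕ)) hcons
        have hlow : ∀ i : Fin d, c (i : ℕ) ≤ (h i : ℕ) := by
          intro i
          have h0 : (0 : ℕ) < d := hd
          have h5 := hchain (i : ℕ) ⟨0, h0⟩ i (by simp)
          have := hc_le (i : ℕ)
          omega
        have hup : ∀ i : Fin d, (h i : ℕ) < n + c i := by
          intro i
          have hlast : d - 1 < d := by omega
          have h1 := hchain ((d - 1) - (i : ℕ)) i ⟨d - 1, hlast⟩ (by simp; have := i.isLt; omega)
          have h2 : (h ⟨d - 1, hlast⟩ : ℕ) < m := (h _).isLt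
          have h3 := hc_lower (i : ℕ) (by have := i.isLt; omega)
          omega
        refine ⟨fun i => ⟨(h i : ℕ) - c i, ?_⟩, ?_⟩
        · have := hup i; have := hlow i; omega
        · intro i j hij
          have hij' : (j : ℕ) = (i : ℕ) + 1 := hij
          have hstep' : (h i : ℕ) < h j := hcons i j hij'
          have hci : c (i : ℕ) ≤ (h i : ℕ) := hlow i
          have hcj := hc_succ (i : ℕ)
          constructor
          · simp only [Fin.mk_le_mk]
            rw [hij']
            split_ifs at hcj <;> omega
          · intro hiS
            have hiT : (i : ℕ) ∉ T := by
              rw [hT, Finset.mem_sdiff]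
              tauto
            rw [if_neg hiT] at hcj
            simp only [Fin.mk_lt_mk]
            rw [hij']
            omega
      · rintro ⟨g, hg⟩
        apply Subtype.ext
        funext i
        apply Fin.ext
        show ((g i : ℕ) + c i) - c i = (g i : ℕ)
        omega
      · rintro ⟨h, hh⟩
        apply Subtype.ext
        funext i
        apply Fin.ext
        have hcons : ∀ i j : Fin d, (j : ℕ) = (i : ℕ) + 1 → ((h i : ℕ)) < ((h j : ℕ)) := by
          intro i j hij
          exact hh (Fin.lt_def.mpr (by omega))
        have hchain := add_le_chain (f := fun i => (h i : ℕ)) hcons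
        have h0 : (0 : ℕ) < d := hd
        have h1 := hchain (i : ℕ) ⟨0, h0⟩ i (by simp)
        have h2 := hc_le (i : ℕ)
        simp only []
        show ((h i : ℕ) - c i) + c i = (h i : ℕ)
        omega
    rw [Nat.card_congr key, card_strictMono]
  · rw [if_neg hn]
    rw [Nat.card_eq_zero]
    left
    constructor
    rintro ⟨g, hg⟩
    have hn0 : 0 < n := by
      have h0 : (0 : ℕ) < d := hd
      exact Nat.pos_of_ne_zero (fun h => by subst h; exact (g ⟨0, h0⟩).elim0)
    have hcons := hstep g hg
    have hchain := add_le_chain (f := fun i => (g i : ℕ) + c i) hcons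
    have h0 : (0 : ℕ) < d := hd
    have hlast : d - 1 < d := by omega
    have h1 := hchain (d - 1) ⟨0, h0⟩ ⟨d - 1, hlast⟩ (by simp only [Fin.val_mk]; omega)
    dsimp only at h1
    have h2 : (g ⟨d - 1, hlast⟩ : ℕ) < n := (g _).isLt
    have h3 : c (d - 1) = d - 1 - S.card := hc_top
    omega



lemma exists_label {V : Type*} [Fintype V] {d : ℕ} (hV : Fintype.card V = d)
    (o : V → V → Prop) (htg : ∀ v, ¬ Relation.TransGen o v v) :
    ∃ ℓ : V ≃ Fin d, ∀ u v, o u v → ℓ v < ℓ u := by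
  classical
  let r : V → V → Prop := fun a b => Relation.TransGen o a b ∨ a = b
  haveI : IsPartialOrder V r :=
    { refl := fun a => Or.inr rfl
      trans := by
        rintro a b c (hab | rfl) (hbc | rfl)
        · exact Or.inl (hab.trans hbc)
        · exact Or.inl hab
        · exact Or.inl hbc
        · exact Or.inr rfl
      antisymm := by
        rintro a b (hab | rfl) (hba | hba)
        · exact absurd (hab.trans hba) (htg a)
        · exact hba.symm
        · rfl
        · rfl }
  obtain ⟨s, hs, hrs⟩ := extend_partialOrder r
  haveI : IsTotal V (flip s) := ⟨fun a b => (hs.toTotal.total b a)⟩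
  haveI : IsTrans V (flip s) := ⟨fun a b c hab hbc => hs.toIsPartialOrder.toIsPreorder.toIsTrans.trans c b a hbc hab⟩
  let l : List V := (Finset.univ.toList (α := V)).insertionSort (flip s)
  have hperm : List.Perm l Finset.univ.toList := List.perm_insertionSort _ _
  have hnodup : l.Nodup := hperm.nodup_iff.mpr (Finset.nodup_toList _)
  have hlen : l.length = d := by
    rw [hperm.length_eq, Finset.length_toList, Finset.card_univ, hV]
  have hmem : ∀ v : V, v ∈ l := fun v => hperm.mem_iff.mpr (Finset.mem_toList.mpr (Finset.mem_univ v))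
  have hsorted : l.Pairwise (flip s) := List.pairwise_insertionSort _ _
  have hidx : ∀ v : V, l.idxOf v < d := fun v => hlen ▸ List.idxOf_lt_length_iff.mpr (hmem v)
  let f : V → Fin d := fun v => ⟨l.idxOf v, hidx v⟩
  have hinj : Function.Injective f := by
    intro u v huv
    have h1 : l.idxOf u = l.idxOf v := congrArg Fin.val huv
    exact (List.idxOf_inj (hmem u)).mp h1
  have hbij : Function.Bijective f :=
    (Fintype.bijective_iff_injective_and_card f).mpr ⟨hinj, by simp [hV]⟩
  refine ⟨Equiv.ofBijective f hbij, ?_⟩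
  intro u v houv
  have hTG : Relation.TransGen o u v := Relation.TransGen.single houv
  have hne : u ≠ v := by rintro rfl; exact htg u hTG
  have hsuv : s u v := hrs u v (Or.inl hTG)
  show (f v : Fin d) < f u
  rcases lt_trichotomy (l.idxOf u) (l.idxOf v) with h | h | h
  · exfalso
    have := hsorted.rel_get_of_lt (a := ⟨l.idxOf u, by rw [hlen]; exact hidx u⟩)
      (b := ⟨l.idxOf v, by rw [hlen]; exact hidx v⟩) (by exact h)
    simp only [List.idxOf_get] at this
    exact hne (hs.toIsPartialOrder.toAntisymm.antisymm _ _ hsuv this)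
  · exact absurd ((List.idxOf_inj (hmem u)).mp h) hne
  · exact h

open scoped Classical in
noncomputable def DS {d : ℕ} (σ : Equiv.Perm (Fin d)) : Finset ℕ :=
  (Finset.range (d - 1)).filter
    (fun k => ∃ i j : Fin d, (i : ℕ) = k ∧ (j : ℕ) = k + 1 ∧ σ j < σ i)

lemma DS_subset {d : ℕ} (σ : Equiv.Perm (Fin d)) : DS σ ⊆ Finset.range (d - 1) :=
  Finset.filter_subset _ _

lemma mem_DS {d : ℕ} (σ : Equiv.Perm (Fin d)) {i j : Fin d} (hij : (j : ℕ) = (i : ℕ) + 1) :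
    (i : ℕ) ∈ DS σ ↔ σ j < σ i := by
  classical
  rw [DS]
  simp only [Finset.mem_filter, Finset.mem_range]
  constructor
  · rintro ⟨-, i', j', hi', hj', hlt⟩
    have : i' = i := Fin.ext hi'
    have hj : j' = j := Fin.ext (by omega)
    subst this; subst hj
    exact hlt
  · intro hlt
    exact ⟨by have := j.isLt; omega, i, j, rfl, hij.symm ▸ rfl, hlt⟩

lemma MC_mono {d n : ℕ} {S : Finset ℕ} {g : Fin d → Fin n} (hg : MC d n S g) :
    ∀ a b : Fin d, a ≤ b → g a ≤ g b := by
  intro a b hab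
  have := le_chain (f := fun i => (g i : ℕ))
    (fun i j hij => (hg i j hij).1) ((b : ℕ) - a) a b (by omega)
  exact this

lemma MC_jump {d n : ℕ} {σ : Equiv.Perm (Fin d)} {g : Fin d → Fin n}
    (hg : MC d n (DS σ) g) :
    ∀ i j : Fin d, (i : ℕ) < (j : ℕ) → σ j < σ i → g i < g j := by
  suffices H : ∀ (t : ℕ) (i j : Fin d), (j : ℕ) = (i : ℕ) + (t + 1) → σ j < σ i → g i < g j by
    intro i j hij hσ
    exact H ((j : ℕ) - i - 1) i j (by omega) hσ
  intro t
  induction t with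
  | zero =>
    intro i j hij hσ
    exact (hg i j hij).2 ((mem_DS σ hij).mpr hσ)
  | succ t ih =>
    intro i j hij hσ
    have hmidlt : (i : ℕ) + 1 < d := by have := j.isLt; omega
    set mid : Fin d := ⟨(i : ℕ) + 1, hmidlt⟩ with hmid
    rcases lt_or_ge (σ j) (σ mid) with h | h
    · have h1 : g mid < g j := ih mid j (by simp [hmid]; omega) h
      have h2 : g i ≤ g mid := (hg i mid rfl).1
      exact lt_of_le_of_lt h2 h1
    · have h1 : σ mid < σ i := lt_of_le_of_lt h hσ
      have h2 : g i < g mid := (hg i mid rfl).2 ((mem_DS σ rfl).mpr h1)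
      have h3 : g mid ≤ g j := MC_mono hg mid j (by rw [Fin.le_def]; simp [hmid]; omega)
      exact lt_of_lt_of_le h2 h3

def LinExt {d : ℕ} (R : Fin d → Fin d → Prop) (σ : Equiv.Perm (Fin d)) : Prop :=
  ∀ i j : Fin d, R (σ i) (σ j) → i < j

section SortStep

variable {d n : ℕ} (R : Fin d → Fin d → Prop)

lemma sort_linExt {c : Fin d → Fin n} (hc : ∀ a b, R a b → c a < c b) :
    LinExt R (Tuple.sort c) := by
  intro i j hR
  have hmono := Tuple.monotone_sort c
  by_contra hne
  push_neg at hne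
  have := hmono (show j ≤ i from hne)
  exact absurd this (not_le.mpr (hc _ _ hR))

lemma sort_MC {c : Fin d → Fin n} {σ : Equiv.Perm (Fin d)}
    (hsort : Tuple.sort c = σ) : MC d n (DS σ) (c ∘ σ) := by
  have hmono : Monotone (c ∘ σ) := hsort ▸ Tuple.monotone_sort c
  have htie := (Tuple.eq_sort_iff (f := c) (σ := σ)).mp hsort.symm
  intro i j hij
  have hlt : i < j := by rw [Fin.lt_def]; omega
  refine ⟨hmono hlt.le, ?_⟩
  intro hmem
  have hσ : σ j < σ i := (mem_DS σ hij).mp hmem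
  rcases lt_or_eq_of_le (hmono hlt.le) with h | h
  · exact h
  · exact absurd (htie.2 i j hlt h) (asymm hσ)

lemma unsort_compat {σ : Equiv.Perm (Fin d)} (hσ : LinExt R σ)
    {g : Fin d → Fin n} (hg : MC d n (DS σ) g)
    (hR : ∀ a b, R a b → b < a) :
    ∀ a b, R a b → (g ∘ σ.symm) a < (g ∘ σ.symm) b := by
  intro a b hab
  have h1 : σ.symm a < σ.symm b := by
    apply hσ
    rwa [σ.apply_symm_apply, σ.apply_symm_apply]
  have h2 : σ (σ.symm b) < σ (σ.symm a) := by
    rw [σ.apply_symm_apply, σ.apply_symm_apply]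
    exact hR a b hab
  exact MC_jump hg _ _ h1 h2

lemma unsort_sort {σ : Equiv.Perm (Fin d)} (hσ : LinExt R σ)
    {g : Fin d → Fin n} (hg : MC d n (DS σ) g) :
    Tuple.sort (g ∘ σ.symm) = σ := by
  symm
  rw [Tuple.eq_sort_iff]
  constructor
  · intro a b hab
    show g (σ.symm (σ a)) ≤ g (σ.symm (σ b))
    rw [σ.symm_apply_apply, σ.symm_apply_apply]
    exact MC_mono hg a b hab
  · intro i j hij heq
    have heq' : g i = g j := by
      simpa [σ.symm_apply_apply] using heq
    rcases lt_trichotomy (σ i) (σ j) with h | h | h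
    · exact h
    · exact absurd (σ.injective h) (Fin.ne_of_lt hij)
    · exact absurd (MC_jump hg i j hij h) (by rw [heq']; exact lt_irrefl _)

end SortStep


open scoped Classical in
lemma card_sort {d n : ℕ} (hd : 1 ≤ d) (R : Fin d → Fin d → Prop)
    (hR : ∀ a b, R a b → b < a) :
    Nat.card {c : Fin d → Fin n // ∀ a b, R a b → c a < c b} =
      ∑ σ : {σ : Equiv.Perm (Fin d) // LinExt R σ},
        (if (DS σ.1).card + 1 ≤ n then (n - ((DS σ.1).card + 1) + d).choose d else 0) := by
  classical
  let Φ : {c : Fin d → Fin n // ∀ a b, R a b → c a < c b} →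
      {σ : Equiv.Perm (Fin d) // LinExt R σ} :=
    fun c => ⟨Tuple.sort c.1, sort_linExt R c.2⟩
  rw [Nat.card_congr (Equiv.sigmaFiberEquiv Φ).symm, Nat.card_eq_fintype_card,
    Fintype.card_sigma]
  apply Finset.sum_congr rfl
  intro σ _
  have e : {c' : {c : Fin d → Fin n // ∀ a b, R a b → c a < c b} // Φ c' = σ} ≃
      {g : Fin d → Fin n // MC d n (DS σ.1) g} := by
    refine ⟨fun c' => ⟨c'.1.1 ∘ σ.1, ?_⟩,
      fun g => ⟨⟨g.1 ∘ σ.1.symm, unsort_compat R σ.2 g.2 hR⟩,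
        Subtype.ext (unsort_sort R σ.2 g.2)⟩, ?_, ?_⟩
    · have hs : Tuple.sort c'.1.1 = σ.1 := congrArg Subtype.val c'.2
      exact sort_MC hs
    · rintro ⟨⟨c, hc⟩, hfib⟩
      apply Subtype.ext
      apply Subtype.ext
      funext a
      simp
    · rintro ⟨g, hg⟩
      apply Subtype.ext
      funext i
      simp
  rw [← Nat.card_eq_fintype_card, Nat.card_congr e,
    card_MC d n hd (DS σ.1) (DS_subset σ.1)]

lemma rev_linExt {d : ℕ} (R : Fin d → Fin d → Prop) (hR : ∀ a b, R a b → b < a) :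
    LinExt R (Fin.revPerm : Equiv.Perm (Fin d)) := by
  intro i j h
  have := hR _ _ h
  simpa [Fin.rev_lt_rev] using this

lemma DS_rev {d : ℕ} (hd : 1 ≤ d) :
    DS (Fin.revPerm : Equiv.Perm (Fin d)) = Finset.range (d - 1) := by
  apply Finset.Subset.antisymm (DS_subset _)
  intro k hk
  rw [Finset.mem_range] at hk
  have hk1 : k < d := by omega
  have hk2 : k + 1 < d := by omega
  have : ((⟨k, hk1⟩ : Fin d) : ℕ) ∈ DS (Fin.revPerm : Equiv.Perm (Fin d)) := by
    rw [mem_DS (j := ⟨k + 1, hk2⟩) _ (by simp)]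
    simp only [Fin.revPerm_apply]
    rw [Fin.rev_lt_rev]
    simp [Fin.lt_def]
  simpa using this

lemma eq_rev_of_DS_card {d : ℕ} (hd : 1 ≤ d) (σ : Equiv.Perm (Fin d))
    (hcard : (DS σ).card = d - 1) : σ = Fin.revPerm := by
  have hDS : DS σ = Finset.range (d - 1) := by
    apply Finset.eq_of_subset_of_card_le (DS_subset σ)
    rw [hcard, Finset.card_range]
  have hdesc : ∀ i j : Fin d, (j : ℕ) = (i : ℕ) + 1 → σ j < σ i := by
    intro i j hij
    rw [← mem_DS σ hij, hDS, Finset.mem_range]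
    have := j.isLt; omega
  have hchain := add_le_chain (f := fun i => d - 1 - (σ i : ℕ))
    (fun i j hij => by
      have h1 := hdesc i j hij
      have h2 : (σ i : ℕ) < d := (σ i).isLt
      have h3 : (σ j : ℕ) < σ i := h1
      omega)
  have hval : ∀ b : Fin d, (σ b : ℕ) = d - 1 - (b : ℕ) := by
    intro b
    have h0 : (0 : ℕ) < d := hd
    have hlast : d - 1 < d := by omega
    have h1 := hchain (b : ℕ) ⟨0, h0⟩ b (by simp)
    have h2 := hchain ((d - 1) - (b : ℕ)) b ⟨d - 1, hlast⟩
      (by simp only [Fin.val_mk]; have := b.isLt; omega)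
    have h3 : (σ b : ℕ) < d := (σ b).isLt
    have h4 : (σ ⟨0, h0⟩ : ℕ) < d := (σ _).isLt
    have h5 : (σ ⟨d - 1, hlast⟩ : ℕ) < d := (σ _).isLt
    have hb := b.isLt
    omega
  apply Equiv.ext
  intro b
  apply Fin.ext
  rw [hval b]
  simp [Fin.val_rev]
  omega

noncomputable def orient_equiv {V : Type*} [Fintype V] (G : SimpleGraph V) (n : ℕ) :
    {f : V → Fin n // ∀ v w, G.Adj v w → f v ≠ f w} ≃
      Σ o : {o : V → V → Prop // (∀ u v, o u v → G.Adj u v) ∧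
          (∀ u v, G.Adj u v → (o u v ∨ o v u)) ∧ (∀ u v, o u v → ¬ o v u) ∧
          (∀ v, ¬ Relation.TransGen o v v)},
        {f : V → Fin n // ∀ u v, o.1 u v → f u < f v} := by
  classical
  have key : ∀ (f : {f : V → Fin n // ∀ v w, G.Adj v w → f v ≠ f w}),
      (∀ u v, (fun u v => G.Adj u v ∧ f.1 u < f.1 v) u v → G.Adj u v) ∧
      (∀ u v, G.Adj u v → ((fun u v => G.Adj u v ∧ f.1 u < f.1 v) u v ∨
        (fun u v => G.Adj u v ∧ f.1 u < f.1 v) v u)) ∧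
      (∀ u v, (fun u v => G.Adj u v ∧ f.1 u < f.1 v) u v →
        ¬ (fun u v => G.Adj u v ∧ f.1 u < f.1 v) v u) ∧
      (∀ v, ¬ Relation.TransGen (fun u v => G.Adj u v ∧ f.1 u < f.1 v) v v) := by
    intro f
    refine ⟨fun u v h => h.1, ?_, ?_, ?_⟩
    · intro u v hadj
      rcases lt_or_gt_of_ne (f.2 u v hadj) with h | h
      · exact Or.inl ⟨hadj, h⟩
      · exact Or.inr ⟨hadj.symm, h⟩
    · intro u v h h'
      exact absurd h'.2 (not_lt.mpr h.2.le)
    · intro v htg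
      have hmono : ∀ a b, Relation.TransGen (fun u v => G.Adj u v ∧ f.1 u < f.1 v) a b →
          f.1 a < f.1 b := by
        intro a b h
        induction h with
        | single h => exact h.2
        | tail _ h ih => exact ih.trans h.2
      exact lt_irrefl _ (hmono v v htg)
  let Φ : {f : V → Fin n // ∀ v w, G.Adj v w → f v ≠ f w} →
      {o : V → V → Prop // (∀ u v, o u v → G.Adj u v) ∧
        (∀ u v, G.Adj u v → (o u v ∨ o v u)) ∧ (∀ u v, o u v → ¬ o v u) ∧
        (∀ v, ¬ Relation.TransGen o v v)} :=
    fun f => ⟨fun u v => G.Adj u v ∧ f.1 u < f.1 v, key f⟩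
  refine (Equiv.sigmaFiberEquiv Φ).symm.trans (Equiv.sigmaCongrRight fun o => ?_)
  refine ⟨fun f' => ⟨f'.1.1, ?_⟩, fun f => ⟨⟨f.1, ?_⟩, ?_⟩, ?_, ?_⟩
  · -- compat
    intro u v h
    have ho : o.1 = fun u v => G.Adj u v ∧ f'.1.1 u < f'.1.1 v :=
      (congrArg Subtype.val f'.2).symm
    rw [ho] at h
    exact h.2
  · -- proper
    intro v w hadj
    rcases o.2.2.1 v w hadj with h | h
    · exact ne_of_lt (f.2 v w h)
    · exact (ne_of_lt (f.2 w v h)).symm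
  · -- fiber
    apply Subtype.ext
    funext u v
    apply propext
    constructor
    · rintro ⟨hadj, hlt⟩
      rcases o.2.2.1 u v hadj with h | h
      · exact h
      · exact absurd (f.2 v u h) (not_lt.mpr hlt.le)
    · intro h
      exact ⟨o.2.1 u v h, f.2 u v h⟩
  · rintro ⟨⟨f, hf⟩, hfib⟩
    apply Subtype.ext
    rfl
  · rintro ⟨f, hf⟩
    rfl

def relabel_equiv {V : Type*} {d n : ℕ} (o : V → V → Prop) (ℓ : V ≃ Fin d) :
    {f : V → Fin n // ∀ u v, o u v → f u < f v} ≃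
      {c : Fin d → Fin n // ∀ a b, o (ℓ.symm a) (ℓ.symm b) → c a < c b} := by
  refine ⟨fun f => ⟨f.1 ∘ ℓ.symm, fun a b h => f.2 _ _ h⟩,
    fun c => ⟨c.1 ∘ ℓ, fun u v h => c.2 (ℓ u) (ℓ v) (by simpa using h)⟩, ?_, ?_⟩
  · rintro ⟨f, hf⟩
    apply Subtype.ext
    funext v
    simp
  · rintro ⟨c, hc⟩
    apply Subtype.ext
    funext a
    simp

end Stmt17Aux

open Stmt17Aux in
theorem stmt17 {V : Type*} [Fintype V] (d : ℕ) (hV : Fintype.card V = d)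
    (G : SimpleGraph V) (χs : Polynomial ℤ)
    (hgen : (PowerSeries.mk fun n : ℕ =>
        (Nat.card {f : V → Fin n // ∀ v w, G.Adj v w → f v ≠ f w} : ℤ)) *
        (1 - PowerSeries.X) ^ (d + 1) = (χs : PowerSeries ℤ)) :
    (∀ j, 0 ≤ χs.coeff j) ∧
    (1 ≤ d → χs.coeff 0 = 0) ∧
    χs.coeff d = (Nat.card {o : V → V → Prop //
      (∀ u v, o u v → G.Adj u v) ∧
      (∀ u v, G.Adj u v → (o u v ∨ o v u)) ∧
      (∀ u v, o u v → ¬ o v u) ∧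
      (∀ v, ¬ Relation.TransGen o v v)} : ℤ) := by
  classical
  by_cases hd : 1 ≤ d
  swap
  · -- case d = 0
    have hd0 : d = 0 := by omega
    subst hd0
    haveI hE : IsEmpty V := Fintype.card_eq_zero_iff.mp hV
    have hχ : ∀ n : ℕ, (Nat.card {f : V → Fin n // ∀ v w, G.Adj v w → f v ≠ f w} : ℤ) = 1 := by
      intro n
      haveI : Unique {f : V → Fin n // ∀ v w, G.Adj v w → f v ≠ f w} :=
        { default := ⟨fun v => isEmptyElim v, fun v w h => isEmptyElim v⟩
          uniq := fun f => Subtype.ext (funext fun v => isEmptyElim v) }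
      rw [Nat.card_unique]; norm_num
    have hmk : (PowerSeries.mk fun n : ℕ =>
        (Nat.card {f : V → Fin n // ∀ v w, G.Adj v w → f v ≠ f w} : ℤ)) =
        PowerSeries.mk (fun n => (((n + 0).choose 0 : ℕ) : ℤ)) := by
      ext n; simp only [PowerSeries.coeff_mk, hχ n]; simp
    rw [hmk, ps_choose 0] at hgen
    have hχs : χs = 1 := by
      rwa [← Polynomial.coe_one, Polynomial.coe_inj, eq_comm] at hgen
    subst hχs
    refine ⟨?_, ?_, ?_⟩
    · intro j
      rw [Polynomial.coeff_one]
      split_ifs <;> norm_num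
    · intro h; omega
    · haveI : Unique {o : V → V → Prop //
      (∀ u v, o u v → G.Adj u v) ∧
      (∀ u v, G.Adj u v → (o u v ∨ o v u)) ∧
      (∀ u v, o u v → ¬ o v u) ∧
      (∀ v, ¬ Relation.TransGen o v v)} :=
        { default := ⟨fun _ _ => False,
            fun u v h => isEmptyElim u,
            fun u v h => isEmptyElim u,
            fun u v h => isEmptyElim u,
            fun v => isEmptyElim v⟩
          uniq := fun o => Subtype.ext (funext fun u => isEmptyElim u) }
      rw [Nat.card_unique]
      simp
  · -- main case : 1 ≤ d
    have hlab : ∀ o : {o : V → V → Prop //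
      (∀ u v, o u v → G.Adj u v) ∧
      (∀ u v, G.Adj u v → (o u v ∨ o v u)) ∧
      (∀ u v, o u v → ¬ o v u) ∧
      (∀ v, ¬ Relation.TransGen o v v)}, ∃ ℓ : V ≃ Fin d, ∀ u v, o.1 u v → ℓ v < ℓ u :=
      fun o => exists_label hV o.1 o.2.2.2.2
    choose ℓ hℓ using hlab
    have hR : ∀ (o : {o : V → V → Prop //
      (∀ u v, o u v → G.Adj u v) ∧
      (∀ u v, G.Adj u v → (o u v ∨ o v u)) ∧
      (∀ u v, o u v → ¬ o v u) ∧
      (∀ v, ¬ Relation.TransGen o v v)}) (a b : Fin d),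
        o.1 ((ℓ o).symm a) ((ℓ o).symm b) → b < a := by
      intro o a b h
      have h2 := hℓ o _ _ h
      simpa using h2
    have hcount : ∀ n : ℕ,
        Nat.card {f : V → Fin n // ∀ v w, G.Adj v w → f v ≠ f w} =
        ∑ o : {o : V → V → Prop //
      (∀ u v, o u v → G.Adj u v) ∧
      (∀ u v, G.Adj u v → (o u v ∨ o v u)) ∧
      (∀ u v, o u v → ¬ o v u) ∧
      (∀ v, ¬ Relation.TransGen o v v)}, ∑ σ : {σ : Equiv.Perm (Fin d) // Stmt17Aux.LinExt (fun a b => (o).1 ((ℓ o).symm a) ((ℓ o).symm b)) σ},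
          (if (DS σ.1).card + 1 ≤ n then (n - ((DS σ.1).card + 1) + d).choose d else 0) := by
      intro n
      rw [Nat.card_congr (orient_equiv G n), Nat.card_eq_fintype_card, Fintype.card_sigma]
      apply Finset.sum_congr rfl
      intro o _
      rw [← Nat.card_eq_fintype_card, Nat.card_congr (relabel_equiv o.1 (ℓ o)),
        card_sort hd _ (hR o)]
    have hps : (PowerSeries.mk fun n : ℕ =>
          (Nat.card {f : V → Fin n // ∀ v w, G.Adj v w → f v ≠ f w} : ℤ)) *
          (1 - PowerSeries.X) ^ (d + 1)
        = ∑ o : {o : V → V → Prop //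
      (∀ u v, o u v → G.Adj u v) ∧
      (∀ u v, G.Adj u v → (o u v ∨ o v u)) ∧
      (∀ u v, o u v → ¬ o v u) ∧
      (∀ v, ¬ Relation.TransGen o v v)}, ∑ σ : {σ : Equiv.Perm (Fin d) // Stmt17Aux.LinExt (fun a b => (o).1 ((ℓ o).symm a) ((ℓ o).symm b)) σ}, PowerSeries.X ^ ((DS σ.1).card + 1) := by
      have h1 : (PowerSeries.mk fun n : ℕ =>
          (Nat.card {f : V → Fin n // ∀ v w, G.Adj v w → f v ≠ f w} : ℤ)) =
          ∑ o : {o : V → V → Prop //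
      (∀ u v, o u v → G.Adj u v) ∧
      (∀ u v, G.Adj u v → (o u v ∨ o v u)) ∧
      (∀ u v, o u v → ¬ o v u) ∧
      (∀ v, ¬ Relation.TransGen o v v)}, ∑ σ : {σ : Equiv.Perm (Fin d) // Stmt17Aux.LinExt (fun a b => (o).1 ((ℓ o).symm a) ((ℓ o).symm b)) σ},
            PowerSeries.mk (fun n =>
              (if (DS σ.1).card + 1 ≤ n then ((n - ((DS σ.1).card + 1) + d).choose d : ℤ) else 0)) := by
        ext n
        simp only [map_sum, PowerSeries.coeff_mk]
        rw [hcount n]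
        push_cast [apply_ite (Nat.cast : ℕ → ℤ)]
        rfl
      rw [h1, Finset.sum_mul]
      apply Finset.sum_congr rfl
      intro o _
      rw [Finset.sum_mul]
      apply Finset.sum_congr rfl
      intro σ _
      exact ps_shift d ((DS σ.1).card + 1)
    rw [hps] at hgen
    have hcoeff : ∀ j : ℕ, χs.coeff j =
        ∑ o : {o : V → V → Prop //
      (∀ u v, o u v → G.Adj u v) ∧
      (∀ u v, G.Adj u v → (o u v ∨ o v u)) ∧
      (∀ u v, o u v → ¬ o v u) ∧
      (∀ v, ¬ Relation.TransGen o v v)}, ∑ σ : {σ : Equiv.Perm (Fin d) // Stmt17Aux.LinExt (fun a b => (o).1 ((ℓ o).symm a) ((ℓ o).symm b)) σ}, (if j = (DS σ.1).card + 1 then (1 : ℤ) else 0) := by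
      intro j
      rw [← Polynomial.coeff_coe, ← hgen]
      simp only [map_sum, PowerSeries.coeff_X_pow]
    refine ⟨?_, ?_, ?_⟩
    · intro j
      rw [hcoeff j]
      apply Finset.sum_nonneg
      intro o _
      apply Finset.sum_nonneg
      intro σ _
      split_ifs <;> norm_num
    · intro _
      rw [hcoeff 0]
      apply Finset.sum_eq_zero
      intro o _
      apply Finset.sum_eq_zero
      intro σ _
      rw [if_neg]
      omega
    · rw [hcoeff d]
      have hinner : ∀ o : {o : V → V → Prop //
      (∀ u v, o u v → G.Adj u v) ∧
      (∀ u v, G.Adj u v → (o u v ∨ o v u)) ∧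
      (∀ u v, o u v → ¬ o v u) ∧
      (∀ v, ¬ Relation.TransGen o v v)},
          ∑ σ : {σ : Equiv.Perm (Fin d) // Stmt17Aux.LinExt (fun a b => (o).1 ((ℓ o).symm a) ((ℓ o).symm b)) σ}, (if d = (DS σ.1).card + 1 then (1 : ℤ) else 0) = 1 := by
        intro o
        have hrev : Stmt17Aux.LinExt
            (fun a b => o.1 ((ℓ o).symm a) ((ℓ o).symm b)) (Fin.revPerm : Equiv.Perm (Fin d)) :=
          rev_linExt _ (hR o)
        rw [Finset.sum_eq_single (⟨Fin.revPerm, hrev⟩ : {σ : Equiv.Perm (Fin d) // Stmt17Aux.LinExt (fun a b => (o).1 ((ℓ o).symm a) ((ℓ o).symm b)) σ})]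
        · rw [if_pos]
          rw [DS_rev hd, Finset.card_range]
          omega
        · intro σ _ hne
          rw [if_neg]
          intro hcard
          apply hne
          apply Subtype.ext
          exact eq_rev_of_DS_card hd σ.1 (by omega)
        · intro h
          exact absurd (Finset.mem_univ _) h
      rw [Finset.sum_congr rfl (fun o _ => hinner o), Finset.sum_const, Finset.card_univ,
        nsmul_eq_mul, mul_one, Nat.card_eq_fintype_card]
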